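/- Let θ ∈ (0, π/2) and r > 0, set t = r·e^{−iθ}, and let φ = −arg(t − 1) (principal argument). Then the principal argument of e^{−iθ}·R(t) (which equals the r-derivative ∂_r ξ(r·e^{−iθ}) = e^{−iθ}·√(t²−1) with the appropriate branch) satisfies: arg(e^{−iθ}·R(t)) ∈ [−π/2 − θ, −2θ) and arg(e^{−iθ}·R(t)) ∈ (−φ/2 − 3θ/2, −φ/2 − θ]. -/

import Mathlib

open Complex Real

lemma my_arg_exp {z : ℂ} (h1 : -π < z.im) (h2 : z.im ≤ π) :
    Complex.arg (Complex.exp z) = z.im := by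
  rw [← Complex.re_add_im z, Complex.exp_add, ← Complex.ofReal_exp,
    Complex.exp_mul_I]
  rw [Complex.arg_real_mul _ (Real.exp_pos _), Complex.arg_cos_add_sin_mul_I ⟨h1, h2⟩]
  simp

lemma my_arg_lt {z : ℂ} (hz : z.im < 0) : Complex.arg z < Complex.arg (z + 1) := by
  have hz1 : (z + 1).im < 0 := by simpa using hz
  have h0 : z ≠ 0 := fun h => by simp [h] at hz
  have h0' : z + 1 ≠ 0 := fun h => by simp [h] at hz1
  have d1 : (0:ℝ) < ‖z‖ := norm_pos_iff.mpr h0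
  have d2 : (0:ℝ) < ‖(z + 1)‖ := norm_pos_iff.mpr h0'
  rw [Complex.arg_of_im_neg hz, Complex.arg_of_im_neg hz1]
  have e1 : (‖z‖) ^ 2 = z.re ^ 2 + z.im ^ 2 := by
    rw [Complex.sq_norm, Complex.normSq_apply]; ring
  have e2 : ‖(z+1)‖ ^ 2 = (z.re + 1) ^ 2 + z.im ^ 2 := by
    rw [Complex.sq_norm, Complex.normSq_apply]; simp; ring
  have hy2 : 0 < z.im ^ 2 := by nlinarith
  have key : z.re / ‖z‖ < (z + 1).re / ‖(z + 1)‖ := by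
    rw [div_lt_div_iff₀ d1 d2]
    have hre : (z + 1).re = z.re + 1 := by simp
    rw [hre]
    rcases le_or_gt 0 z.re with hx | hx
    · by_contra hcon
      push_neg at hcon
      have hpos : 0 < (z.re + 1) * ‖z‖ := by positivity
      have h2 : ((z.re+1) * ‖z‖) * ((z.re+1) * ‖z‖) ≤
          (z.re * ‖(z+1)‖) * (z.re * ‖(z+1)‖) :=
        mul_self_le_mul_self hpos.le hcon
      nlinarith [mul_nonneg hx hy2.le]
    · rcases le_or_gt (z.re + 1) 0 with hx1 | hx1
      · by_contra hcon
        push_neg at hcon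
        have hnp : z.re * ‖(z+1)‖ ≤ 0 :=
          mul_nonpos_of_nonpos_of_nonneg (by linarith) d2.le
        have hnp2 : (z.re + 1) * ‖z‖ ≤ 0 :=
          mul_nonpos_of_nonpos_of_nonneg hx1 d1.le
        have h2 : (z.re * ‖(z+1)‖) * (z.re * ‖(z+1)‖) ≤
            ((z.re+1) * ‖z‖) * ((z.re+1) * ‖z‖) := by
          nlinarith
        nlinarith [mul_nonneg (neg_nonneg.mpr hx1) hy2.le]
      · have l : z.re * ‖(z+1)‖ < 0 := mul_neg_of_neg_of_pos hx d2
        have r : 0 < (z.re + 1) * ‖z‖ := mul_pos hx1 d1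
        linarith
  have m1 : z.re / ‖z‖ ∈ Set.Icc (-1:ℝ) 1 := by
    constructor
    · rw [le_div_iff₀ d1]; nlinarith [Complex.abs_re_le_norm z, neg_abs_le z.re]
    · rw [div_le_one d1]; exact (abs_le.mp (Complex.abs_re_le_norm z)).2
  have m2 : (z+1).re / ‖(z+1)‖ ∈ Set.Icc (-1:ℝ) 1 := by
    constructor
    · rw [le_div_iff₀ d2]; nlinarith [Complex.abs_re_le_norm (z+1), neg_abs_le (z+1).re]
    · rw [div_le_one d2]; exact (abs_le.mp (Complex.abs_re_le_norm (z+1))).2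
  exact neg_lt_neg (Real.strictAntiOn_arccos m1 m2 key)

lemma my_arg_cpow_half {w : ℂ} (hw : w ≠ 0) :
    Complex.arg (w ^ ((1:ℂ)/2)) = Complex.arg w / 2 := by
  rw [Complex.cpow_def_of_ne_zero hw]
  have him : (Complex.log w * ((1:ℂ)/2)).im = Complex.arg w / 2 := by
    simp [Complex.mul_im, Complex.log_im, Complex.log_re]
    ring
  rw [my_arg_exp] <;> rw [him]
  · linarith [Complex.neg_pi_lt_arg w, Real.pi_pos]
  · linarith [Complex.arg_le_pi w, Real.pi_pos]



open Complex Real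

/-- The branch `R(t) = √(t-1)·√(t+1)` with principal complex square roots. -/
noncomputable def Rb (t : ℂ) : ℂ := (t - 1) ^ ((1 : ℂ)/2) * (t + 1) ^ ((1 : ℂ)/2)

/-- `ξ(t) = (1/2)(t·R(t) − Log(t + R(t)))` with the principal logarithm. -/
noncomputable def xi (t : ℂ) : ℂ := (1/2 : ℂ) * (t * Rb t - Complex.log (t + Rb t))

theorem stmt2 (θ r : ℝ) (hθ : θ ∈ Set.Ioo 0 (π/2)) (hr : 0 < r)
    (t : ℂ) (ht : t = (r : ℂ) * Complex.exp (-(θ : ℂ) * Complex.I))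
    (φ : ℝ) (hφ : φ = - Complex.arg (t - 1)) :
    Complex.arg (Complex.exp (-(θ : ℂ) * Complex.I) * Rb t) ∈
      Set.Ico (-(π/2) - θ) (-(2*θ)) ∧
    Complex.arg (Complex.exp (-(θ : ℂ) * Complex.I) * Rb t) ∈
      Set.Ioc (-(φ/2) - 3*θ/2) (-(φ/2) - θ) := by
  obtain ⟨hθ0, hθπ⟩ := hθ
  have hπ := Real.pi_pos
  have hsin : 0 < Real.sin θ := Real.sin_pos_of_pos_of_lt_pi hθ0 (by linarith)
  have hsin2 : 0 < Real.sin (2*θ) := Real.sin_pos_of_pos_of_lt_pi (by linarith) (by linarith)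
  have hexp : Complex.exp (-(θ:ℂ) * I) = ↑(Real.cos (-θ)) + ↑(Real.sin (-θ)) * I := by
    rw [show -(θ:ℂ) * I = ((-θ:ℝ):ℂ) * I by push_cast; ring, Complex.exp_mul_I,
      Complex.ofReal_cos, Complex.ofReal_sin]
  have ht' : t = ↑(r * Real.cos (-θ)) + ↑(r * Real.sin (-θ)) * I := by
    rw [ht, hexp]; push_cast; ring
  have harg_t : Complex.arg t = -θ := by
    rw [ht, hexp, Complex.ofReal_cos, Complex.ofReal_sin]
    exact Complex.arg_mul_cos_add_sin_mul_I (θ := -θ) hr ⟨by linarith, by linarith⟩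
  have him_t : t.im = r * Real.sin (-θ) := by
    rw [ht']
    simp only [Complex.add_im, Complex.mul_im, Complex.ofReal_re, Complex.ofReal_im,
      Complex.I_re, Complex.I_im]
    ring
  have him_t' : t.im < 0 := by
    rw [him_t, Real.sin_neg]; nlinarith
  have ht2 : t^2 = ↑(r^2) * (↑(Real.cos (-(2*θ))) + ↑(Real.sin (-(2*θ))) * I) := by
    rw [ht, mul_pow, sq (Complex.exp _), ← Complex.exp_add,
      show -(θ:ℂ) * I + -(θ:ℂ) * I = ((-(2*θ):ℝ):ℂ) * I by push_cast; ring,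
      Complex.exp_mul_I, Complex.ofReal_cos, Complex.ofReal_sin]
    push_cast; ring
  have ht2' : t^2 = ↑(r^2 * Real.cos (-(2*θ))) + ↑(r^2 * Real.sin (-(2*θ))) * I := by
    rw [ht2]; push_cast; ring
  have harg_t2 : Complex.arg (t^2) = -(2*θ) := by
    rw [ht2, Complex.ofReal_cos, Complex.ofReal_sin]
    exact Complex.arg_mul_cos_add_sin_mul_I (r := r^2) (θ := -(2*θ)) (by positivity) ⟨by linarith, by linarith⟩
  have him_t2 : (t^2).im < 0 := by
    rw [ht2']
    simp only [Complex.add_im, Complex.mul_im, Complex.ofReal_re, Complex.ofReal_im,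
      Complex.I_re, Complex.I_im]
    rw [Real.sin_neg]
    have hp : 0 < r^2 * Real.sin (2*θ) := by positivity
    nlinarith
  have hαmem : Complex.arg (t-1) ∈ Set.Ioo (-π) 0 :=
    ⟨Complex.neg_pi_lt_arg _, Complex.arg_neg_iff.2 (by simpa using him_t')⟩
  have hβmem : Complex.arg (t+1) ∈ Set.Ioo (-π) 0 :=
    ⟨Complex.neg_pi_lt_arg _, Complex.arg_neg_iff.2 (by simpa using him_t')⟩
  have hSmem : Complex.arg (t^2-1) ∈ Set.Ioo (-π) 0 :=
    ⟨Complex.neg_pi_lt_arg _, Complex.arg_neg_iff.2 (by simpa using him_t2)⟩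
  have hSlt : Complex.arg (t^2-1) < -(2*θ) := by
    have := my_arg_lt (z := t^2 - 1) (by simpa using him_t2)
    rwa [sub_add_cancel, harg_t2] at this
  have hβgt : -θ < Complex.arg (t+1) := by
    have := my_arg_lt (z := t) him_t'
    rwa [harg_t] at this
  have hne1 : t - 1 ≠ 0 := fun h => by
    have h2 : (t-1).im = 0 := by rw [h]; simp
    simp only [Complex.sub_im, Complex.one_im, sub_zero] at h2
    rw [h2] at him_t'; exact lt_irrefl _ him_t'
  have hne2 : t + 1 ≠ 0 := fun h => by
    have h2 : (t+1).im = 0 := by rw [h]; simp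
    simp only [Complex.add_im, Complex.one_im, add_zero] at h2
    rw [h2] at him_t'; exact lt_irrefl _ him_t'
  have hsum : Complex.arg (t-1) + Complex.arg (t+1) = Complex.arg (t^2-1) := by
    have hangle : (Complex.arg (t^2-1) : Real.Angle) =
        ((Complex.arg (t-1) + Complex.arg (t+1) : ℝ) : Real.Angle) := by
      rw [show t^2 - 1 = (t-1)*(t+1) by ring, Real.Angle.coe_add]
      exact Complex.arg_mul_coe_angle hne1 hne2
    rw [Real.Angle.angle_eq_iff_two_pi_dvd_sub] at hangle
    obtain ⟨k, hk⟩ := hangle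
    have h1 : -π < 2*π*(k:ℝ) := by
      rw [← hk]; linarith [hSmem.1, hαmem.2, hβmem.2]
    have h2 : 2*π*(k:ℝ) < 2*π := by
      rw [← hk]; linarith [hSmem.2, hαmem.1, hβmem.1]
    have hl : (-1:ℝ) < (k:ℝ) := by nlinarith
    have hu : (k:ℝ) < 1 := by nlinarith
    have hk0 : k = 0 := by
      have hl' : (-1:ℤ) < k := by exact_mod_cast hl
      have hu' : k < 1 := by exact_mod_cast hu
      omega
    rw [hk0] at hk
    push_cast at hk
    linarith
  have hu_ne : (t-1) ^ ((1:ℂ)/2) ≠ 0 := by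
    rw [Complex.cpow_def_of_ne_zero hne1]; exact Complex.exp_ne_zero _
  have hv_ne : (t+1) ^ ((1:ℂ)/2) ≠ 0 := by
    rw [Complex.cpow_def_of_ne_zero hne2]; exact Complex.exp_ne_zero _
  have hargu : Complex.arg ((t-1) ^ ((1:ℂ)/2)) = Complex.arg (t-1) / 2 :=
    my_arg_cpow_half hne1
  have hargv : Complex.arg ((t+1) ^ ((1:ℂ)/2)) = Complex.arg (t+1) / 2 :=
    my_arg_cpow_half hne2
  have hmem1 : Complex.arg ((t-1) ^ ((1:ℂ)/2)) + Complex.arg ((t+1) ^ ((1:ℂ)/2)) ∈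
      Set.Ioc (-π) π := by
    rw [hargu, hargv]
    exact ⟨by linarith [hαmem.1, hβmem.1], by linarith [hαmem.2, hβmem.2]⟩
  have hRb : Complex.arg (Rb t) = (Complex.arg (t-1) + Complex.arg (t+1)) / 2 := by
    unfold Rb
    rw [Complex.arg_mul hu_ne hv_ne hmem1, hargu, hargv]
    ring
  have hexp_ne : Complex.exp (-(θ:ℂ) * I) ≠ 0 := Complex.exp_ne_zero _
  have hRb_ne : Rb t ≠ 0 := mul_ne_zero hu_ne hv_ne
  have harge : Complex.arg (Complex.exp (-(θ:ℂ) * I)) = -θ := by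
    have him : (-(θ:ℂ) * I).im = -θ := by simp
    rw [my_arg_exp (by rw [him]; linarith) (by rw [him]; linarith), him]
  have hmem2 : Complex.arg (Complex.exp (-(θ:ℂ) * I)) + Complex.arg (Rb t) ∈
      Set.Ioc (-π) π := by
    rw [harge, hRb, hsum]
    exact ⟨by linarith [hSmem.1], by linarith [hSmem.2]⟩
  have hA := Complex.arg_mul hexp_ne hRb_ne hmem2
  rw [harge, hRb] at hA
  rw [hA, hφ]
  have hS1 : -π < Complex.arg (t-1) + Complex.arg (t+1) := by rw [hsum]; exact hSmem.1
  have hS2 : Complex.arg (t-1) + Complex.arg (t+1) < -(2*θ) := by rw [hsum]; exact hSlt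
  have hβ2 := hβmem.2
  refine ⟨⟨by linarith, by linarith⟩, ⟨by linarith, by linarith⟩⟩
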